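/- Let q be a monic polynomial of degree d over ℂ with no roots of modulus R, where R > 0. Then (1/2π) ∫₀^{2π} log|q(R e^{iθ})| dθ = Σ_{|rᵢ| > R} log|rᵢ| + Σ_{|rᵢ| < R} log R, where the sums run over the roots rᵢ of q counted with multiplicity. -/

import Mathlib

open Real Complex Polynomial Metric
lemma meanA (R : ℝ) (hR : 0 < R) (a : ℂ) (ha : ‖a‖ * R < 1) :
    ∫ θ in (0:ℝ)..(2*Real.pi),
      Real.log (‖1 - a * ((R:ℂ) * Complex.exp (θ * Complex.I))‖) = 0 := by
  set f : ℂ → ℂ := fun z => Complex.log (1 - a * z) with hf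
  have hmem : ∀ z ∈ closedBall (0:ℂ) R, (1 - a * z) ∈ Complex.slitPlane := by
    intro z hz
    simp only [mem_closedBall, dist_zero_right] at hz
    left
    have h1 : ‖a * z‖ < 1 := by
      calc ‖a * z‖ = ‖a‖ * ‖z‖ := norm_mul _ _
      _ ≤ ‖a‖ * R := by gcongr
      _ < 1 := ha
    have h2 := (abs_lt.1 ((Complex.abs_re_le_norm (a*z)).trans_lt h1)).2
    simp only [Complex.sub_re, Complex.one_re]
    linarith
  have hd : DifferentiableOn ℂ f (closedBall 0 R) := by
    intro z hz
    exact ((differentiableAt_const (1:ℂ)).sub ((differentiableAt_const a).mul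
      differentiableAt_id)).clog (hmem z hz) |>.differentiableWithinAt
  have hcauchy := hd.circleIntegral_sub_inv_smul (w := 0) (mem_ball_self hR)
  have hf0 : f 0 = 0 := by simp [hf]
  rw [hf0, smul_zero] at hcauchy
  rw [circleIntegral] at hcauchy
  have hne : ∀ θ : ℝ, circleMap 0 R θ ≠ 0 := fun θ => circleMap_ne_center hR.ne'
  have heq : ∀ θ : ℝ, deriv (circleMap 0 R) θ • ((circleMap 0 R θ - 0)⁻¹ • f (circleMap 0 R θ))
      = Complex.I * f (circleMap 0 R θ) := by
    intro θ
    rw [deriv_circleMap]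
    simp only [sub_zero, smul_eq_mul]
    field_simp [hne θ]
  simp only [heq] at hcauchy
  rw [intervalIntegral.integral_const_mul] at hcauchy
  have hint : ∫ θ in (0:ℝ)..(2*Real.pi), f (circleMap 0 R θ) = 0 := by
    rcases mul_eq_zero.1 hcauchy with h | h
    · exact absurd h Complex.I_ne_zero
    · exact h
  have hcont : Continuous fun θ : ℝ => f (circleMap 0 R θ) := by
    apply Continuous.clog
    · exact continuous_const.sub (continuous_const.mul (continuous_circleMap 0 R))
    · intro θ
      exact hmem _ (by simp [circleMap, abs_of_pos hR, Complex.norm_exp])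
  have key : (fun θ : ℝ => Real.log (‖1 - a * ((R:ℂ) * Complex.exp (θ * Complex.I))‖))
      = fun θ => Complex.reCLM (f (circleMap 0 R θ)) := by
    funext θ
    show _ = (f (circleMap 0 R θ)).re
    rw [hf]
    simp only [Complex.log_re, circleMap, zero_add]
  rw [key, Complex.reCLM.intervalIntegral_comp_comm
    (hcont.intervalIntegrable (0:ℝ) (2*Real.pi)), hint]
  simp
lemma nzA (R : ℝ) (hR : 0 < R) (a : ℂ) (haR : ‖a‖ * R < 1) (θ : ℝ) :
    ‖1 - a * ((R:ℂ) * Complex.exp (θ * Complex.I))‖ ≠ 0 := by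
  rw [ne_eq, norm_eq_zero, sub_eq_zero]
  intro h
  have habs : ‖a * ((R:ℂ) * Complex.exp (θ * Complex.I))‖ = ‖a‖ * R := by
    rw [norm_mul, norm_mul]
    simp [Complex.norm_exp, abs_of_pos hR]
  rw [← h] at habs
  simp only [norm_one] at habs
  linarith

lemma contA (R : ℝ) (a : ℂ) :
    Continuous fun θ : ℝ => ‖1 - a * ((R:ℂ) * Complex.exp (θ * Complex.I))‖ :=
  continuous_norm.comp (continuous_const.sub (continuous_const.mul
    (continuous_const.mul (Complex.continuous_exp.comp
      ((Complex.continuous_ofReal).mul continuous_const)))))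

lemma meanB (R : ℝ) (hR : 0 < R) (c : ℂ) (hc : ‖c‖ ≠ R)
    (hA : ∀ a : ℂ, ‖a‖ * R < 1 → ∫ θ in (0:ℝ)..(2*Real.pi),
      Real.log (‖1 - a * ((R:ℂ) * Complex.exp (θ * Complex.I))‖) = 0) :
    ∫ θ in (0:ℝ)..(2*Real.pi),
      Real.log (‖(R:ℂ) * Complex.exp (θ * Complex.I) - c‖)
      = 2*Real.pi * (if R < ‖c‖ then Real.log (‖c‖) else Real.log R) := by
  rcases lt_or_gt_of_ne hc with hlt | hgt
  · -- |c| < R : use a = conj c / R^2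
    rw [if_neg (not_lt.2 hlt.le)]
    set a : ℂ := (starRingEnd ℂ) c / (R:ℂ)^2 with ha
    have haR : ‖a‖ * R < 1 := by
      rw [ha, norm_div, norm_pow]
      simp only [Complex.norm_conj, Complex.norm_real, Real.norm_eq_abs, abs_of_pos hR]
      rw [div_mul_eq_mul_div, div_lt_one (by positivity)]
      nlinarith
    have hid : ∀ θ : ℝ, ‖(R:ℂ) * Complex.exp (θ * Complex.I) - c‖
        = R * ‖1 - a * ((R:ℂ) * Complex.exp (θ * Complex.I))‖ := by
      intro θ
      set w : ℂ := Complex.exp (θ * Complex.I) with hwdef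
      have hw : ‖w‖ = 1 := by simp [hwdef, Complex.norm_exp]
      have hw0 : w ≠ 0 := by intro h; rw [h] at hw; simp at hw
      have hconj : w * (starRingEnd ℂ) w = 1 := by
        rw [Complex.mul_conj, Complex.normSq_eq_norm_sq, hw]; norm_num
      have hR0 : (R:ℂ) ≠ 0 := by exact_mod_cast hR.ne'
      have e1 : (1 - a * ((R:ℂ) * w)) = ((R:ℂ) - (starRingEnd ℂ) c * w) / R := by
        rw [ha]; field_simp
      rw [e1, norm_div]
      have e2 : ‖(R:ℂ) - (starRingEnd ℂ) c * w‖
          = ‖(R:ℂ) * w - c‖ := by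
        rw [← Complex.norm_conj ((R:ℂ) - (starRingEnd ℂ) c * w)]
        have e2a : (starRingEnd ℂ) ((R:ℂ) - (starRingEnd ℂ) c * w)
            = (R:ℂ) - c * (starRingEnd ℂ) w := by
          simp [map_sub, map_mul, Complex.conj_ofReal, Complex.conj_conj]
        rw [e2a]
        have e3 : (R:ℂ) * w - c = w * ((R:ℂ) - c * (starRingEnd ℂ) w) := by
          rw [mul_sub]
          rw [show w * (c * (starRingEnd ℂ) w) = c * (w * (starRingEnd ℂ) w) by ring, hconj]
          ring
        rw [e3, norm_mul, hw, one_mul]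
      rw [e2]
      simp only [Complex.norm_real, Real.norm_eq_abs, abs_of_pos hR]
      field_simp
    have hlog : ∀ θ : ℝ, Real.log (‖(R:ℂ) * Complex.exp (θ * Complex.I) - c‖)
        = Real.log R + Real.log (‖1 - a * ((R:ℂ) * Complex.exp (θ * Complex.I))‖) := by
      intro θ
      rw [hid θ, Real.log_mul hR.ne' (nzA R hR a haR θ)]
    simp only [hlog]
    rw [intervalIntegral.integral_add intervalIntegrable_const
      (((contA R a).log (nzA R hR a haR)).intervalIntegrable _ _)]
    rw [hA a haR, add_zero, intervalIntegral.integral_const, smul_eq_mul, sub_zero]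
  · -- |c| > R : use a = 1/c
    rw [if_pos hgt]
    have hc0 : c ≠ 0 := by
      intro h; rw [h] at hgt; simp at hgt; linarith
    set a : ℂ := 1/c with ha
    have haR : ‖a‖ * R < 1 := by
      rw [ha, norm_div, norm_one]
      rw [div_mul_eq_mul_div, one_mul, div_lt_one (by simpa using hc0)]
      exact hgt
    have hid : ∀ θ : ℝ, ‖(R:ℂ) * Complex.exp (θ * Complex.I) - c‖
        = ‖c‖ * ‖1 - a * ((R:ℂ) * Complex.exp (θ * Complex.I))‖ := by
      intro θ
      rw [← norm_mul]
      have e1 : c * (1 - a * ((R:ℂ) * Complex.exp (θ * Complex.I)))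
          = -(((R:ℂ) * Complex.exp (θ * Complex.I)) - c) := by
        rw [ha]; field_simp; ring
      rw [e1, norm_neg]
    have hlog : ∀ θ : ℝ, Real.log (‖(R:ℂ) * Complex.exp (θ * Complex.I) - c‖)
        = Real.log (‖c‖)
          + Real.log (‖1 - a * ((R:ℂ) * Complex.exp (θ * Complex.I))‖) := by
      intro θ
      rw [hid θ, Real.log_mul (by simpa using hc0) (nzA R hR a haR θ)]
    simp only [hlog]
    rw [intervalIntegral.integral_add intervalIntegrable_const
      (((contA R a).log (nzA R hR a haR)).intervalIntegrable _ _)]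
    rw [hA a haR, add_zero, intervalIntegral.integral_const, smul_eq_mul, sub_zero]

lemma facNZ (R : ℝ) (hR : 0 < R) (r : ℂ) (hr : ‖r‖ ≠ R) (θ : ℝ) :
    (R:ℂ) * Complex.exp (θ * Complex.I) - r ≠ 0 := by
  rw [sub_ne_zero]
  intro h
  exact hr (by rw [← h]; simp [Complex.norm_exp, abs_of_pos hR])

lemma contProd (R : ℝ) (s : Multiset ℂ) :
    Continuous fun θ : ℝ => ((s.map fun r => (R:ℂ) * Complex.exp (θ * Complex.I) - r).prod) := by
  induction s using Multiset.induction_on with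
  | empty => simpa using continuous_const
  | cons a s ih =>
    simp only [Multiset.map_cons, Multiset.prod_cons]
    exact ((continuous_const.mul (Complex.continuous_exp.comp
      ((Complex.continuous_ofReal).mul continuous_const))).sub continuous_const).mul ih

lemma keyInt (R : ℝ) (hR : 0 < R) (s : Multiset ℂ) (hs : ∀ r ∈ s, ‖r‖ ≠ R) :
    ∫ θ in (0:ℝ)..(2*Real.pi),
      Real.log (‖(s.map fun r => (R:ℂ) * Complex.exp (θ * Complex.I) - r).prod‖)
    = (s.map fun r => 2*Real.pi *
        (if R < ‖r‖ then Real.log (‖r‖) else Real.log R)).sum := by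
  revert hs
  induction s using Multiset.induction_on with
  | empty => intro _; simp
  | cons a s ih =>
    intro hs
    have ha : ‖a‖ ≠ R := hs a (Multiset.mem_cons_self a s)
    have hs' : ∀ r ∈ s, ‖r‖ ≠ R := fun r hr => hs r (Multiset.mem_cons_of_mem hr)
    have hprodnz : ∀ θ : ℝ, ((s.map fun r => (R:ℂ) * Complex.exp (θ * Complex.I) - r).prod) ≠ 0 := by
      intro θ
      apply Multiset.prod_ne_zero
      intro h0
      rw [Multiset.mem_map] at h0
      obtain ⟨r, hr, hr0⟩ := h0
      exact facNZ R hR r (hs' r hr) θ hr0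
    have hlog : ∀ θ : ℝ,
        Real.log (‖((a ::ₘ s).map fun r => (R:ℂ) * Complex.exp (θ * Complex.I) - r).prod‖)
        = Real.log (‖(R:ℂ) * Complex.exp (θ * Complex.I) - a‖)
          + Real.log (‖(s.map fun r => (R:ℂ) * Complex.exp (θ * Complex.I) - r).prod‖) := by
      intro θ
      rw [Multiset.map_cons, Multiset.prod_cons, norm_mul, Real.log_mul]
      · exact fun h => facNZ R hR a ha θ (by rwa [norm_eq_zero] at h)
      · exact fun h => hprodnz θ (by rwa [norm_eq_zero] at h)
    simp only [hlog]
    have hint1 : IntervalIntegrable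
        (fun θ : ℝ => Real.log (‖(R:ℂ) * Complex.exp (θ * Complex.I) - a‖))
        MeasureTheory.volume 0 (2*Real.pi) := by
      apply Continuous.intervalIntegrable
      apply Continuous.log
      · exact continuous_norm.comp ((continuous_const.mul (Complex.continuous_exp.comp
          ((Complex.continuous_ofReal).mul continuous_const))).sub continuous_const)
      · exact fun θ h => facNZ R hR a ha θ (by rwa [norm_eq_zero] at h)
    have hint2 : IntervalIntegrable
        (fun θ : ℝ => Real.log (‖(s.map fun r => (R:ℂ) * Complex.exp (θ * Complex.I) - r).prod‖))
        MeasureTheory.volume 0 (2*Real.pi) := by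
      apply Continuous.intervalIntegrable
      apply Continuous.log
      · exact continuous_norm.comp (contProd R s)
      · exact fun θ h => hprodnz θ (by simpa using h)
    rw [intervalIntegral.integral_add hint1 hint2, meanB R hR a ha (fun a haR => meanA R hR a haR), ih hs',
      Multiset.map_cons, Multiset.sum_cons]

theorem mahler_circle_integral (q : Polynomial ℂ) (d : ℕ) (hd : q.natDegree = d)
    (hq : q.Monic) (R : ℝ) (hR : 0 < R)
    (hroots : ∀ z ∈ q.roots, ‖z‖ ≠ R) :
    (1 / (2 * Real.pi)) * ∫ θ in (0:ℝ)..(2 * Real.pi),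
        Real.log (‖q.eval ((R : ℂ) * Complex.exp (θ * Complex.I))‖)
      = (q.roots.map (fun r => if R < ‖r‖ then Real.log (‖r‖)
          else Real.log R)).sum := by
  have hsplit : q = (q.roots.map fun a => X - C a).prod :=
    (IsAlgClosed.splits q).eq_prod_roots_of_monic hq
  have heval : ∀ z : ℂ, q.eval z = (q.roots.map fun r => z - r).prod := by
    intro z
    conv_lhs => rw [hsplit]
    rw [eval_multiset_prod, Multiset.map_map]
    congr 1
    ext r
    simp
  simp only [heval]
  rw [keyInt R hR q.roots hroots, Multiset.sum_map_mul_left]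
  rw [← mul_assoc]
  rw [one_div, inv_mul_cancel₀ (by positivity), one_mul]
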